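/- Let G = K_{n_1,...,n_t} be the complete t-partite graph on n vertices. Then the characteristic polynomial of its distance matrix equals (λ+2)^{n−t}·[∏_{i=1}^t(λ−n_i+2) − ∑_{i=1}^t n_i ∏_{j≠i}(λ−n_j+2)]. -/

import Mathlib

open Matrix BigOperators Polynomial
open scoped Classical

/-- The distance matrix of the complete multipartite graph `K_{n_1,…,n_t}`:
distance `1` between different parts and `2` within a part. -/
noncomputable def dMatKMP {t : ℕ} (n : Fin t → ℕ) :
    Matrix (Σ i : Fin t, Fin (n i)) (Σ i : Fin t, Fin (n i)) ℝ :=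
  fun x y => if x = y then 0 else if x.1 = y.1 then 2 else 1

lemma eval_charpoly' {m : Type*} [Fintype m] [DecidableEq m] (M : Matrix m m ℝ) (r : ℝ) :
    (M.charpoly).eval r = (r • (1 : Matrix m m ℝ) - M).det := by
  rw [Matrix.charpoly, ← coe_evalRingHom, RingHom.map_det]
  congr 1
  ext i j
  simp [charmatrix_apply, Matrix.one_apply, Matrix.diagonal_apply, apply_ite, Matrix.sub_apply,
    Matrix.smul_apply]

lemma key_det {t : ℕ} (n : Fin t → ℕ) (htN : t ≤ ∑ i, n i) (x : ℝ) (hx : x + 2 ≠ 0)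
    (hd : ∀ i, x - (n i : ℝ) + 2 ≠ 0) :
    (x • (1 : Matrix (Σ i : Fin t, Fin (n i)) (Σ i : Fin t, Fin (n i)) ℝ) - dMatKMP n).det
      = (x + 2) ^ ((∑ i, n i) - t) *
        ((∏ i, (x - (n i : ℝ) + 2))
          - ∑ i, (n i : ℝ) * ∏ j ∈ Finset.univ.erase i, (x - (n j : ℝ) + 2)) := by
  classical
  set ι := (Σ i : Fin t, Fin (n i))
  set W : Matrix ι (Fin t) ℝ := fun p j => if p.1 = j then 1 else 0 with hWdef
  set Bt : Matrix (Fin t) (Fin t) ℝ := fun i j => if i = j then 2 else 1 with hBtdef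
  set d : Fin t → ℝ := fun i => x - (n i : ℝ) + 2 with hddef
  have hWB : ∀ p k, (W * Bt) p k = Bt p.1 k := by
    intro p k
    rw [Matrix.mul_apply]
    simp [hWdef, ite_mul, Finset.sum_ite_eq]
  have hWBW : ∀ p q : ι, (W * Bt * Wᵀ) p q = Bt p.1 q.1 := by
    intro p q
    rw [Matrix.mul_apply]
    simp only [hWB, Matrix.transpose_apply]
    simp only [hWB, Matrix.transpose_apply, hWdef, mul_ite, mul_one, mul_zero]
    simp [Finset.sum_ite_eq' Finset.univ q.1 (fun k => Bt p.1 k)]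
  -- step 1: rewrite the matrix
  have hD : x • (1 : Matrix ι ι ℝ) - dMatKMP n
      = (x + 2) • (1 : Matrix ι ι ℝ) - W * Bt * Wᵀ := by
    ext p q
    by_cases hpq : p = q
    · subst hpq
      simp only [Matrix.sub_apply, hWBW]
      simp [dMatKMP, hWBW, Matrix.sub_apply, Matrix.smul_apply, Matrix.one_apply, hBtdef]
    · by_cases h1 : p.1 = q.1
      · simp only [Matrix.sub_apply, hWBW]
        simp [dMatKMP, hWBW, Matrix.sub_apply, Matrix.smul_apply, Matrix.one_apply, hpq, hBtdef, h1]
      · simp only [Matrix.sub_apply, hWBW]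
        simp [dMatKMP, hWBW, Matrix.sub_apply, Matrix.smul_apply, Matrix.one_apply, hpq, hBtdef, h1]
  have hcard : Fintype.card ι = ∑ i, n i := by
    simp [ι, Fintype.card_sigma]
  -- factor out (x+2)
  have hfac : (x + 2) • (1 : Matrix ι ι ℝ) - W * Bt * Wᵀ
      = (x + 2) • ((1 : Matrix ι ι ℝ) + ((-(x + 2)⁻¹) • W) * (Bt * Wᵀ)) := by
    rw [Matrix.smul_mul, smul_add, smul_smul, ← Matrix.mul_assoc]
    rw [mul_neg, mul_inv_cancel₀ hx]
    simp [sub_eq_add_neg]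
  have hWW : Wᵀ * W = Matrix.diagonal (fun i => (n i : ℝ)) := by
    ext i j
    rw [Matrix.mul_apply, ← Finset.univ_sigma_univ, Finset.sum_sigma]
    show (∑ k : Fin t, ∑ a : Fin (n k), (if k = i then (1:ℝ) else 0) * (if k = j then 1 else 0)) = _
    simp only [Finset.sum_const, Finset.card_univ, Fintype.card_fin, nsmul_eq_mul]
    by_cases hij : i = j
    · subst hij
      rw [Finset.sum_eq_single i]
      · simp
      · intro b _ hb; simp [hb]
      · simp
    · rw [Matrix.diagonal_apply_ne _ hij, Finset.sum_eq_zero]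
      intro k _
      by_cases h : k = i
      · subst h; rw [if_pos rfl, if_neg hij]; ring
      · rw [if_neg h]; ring
  have comm := Matrix.det_one_add_mul_comm ((-(x + 2)⁻¹) • W) (Bt * Wᵀ)
  have hBA : (Bt * Wᵀ) * ((-(x + 2)⁻¹) • W)
      = (-(x + 2)⁻¹) • (Bt * Matrix.diagonal (fun i => (n i : ℝ))) := by
    rw [Matrix.mul_smul, Matrix.mul_assoc, hWW]
  -- the small matrix
  have hsmall : (1 : Matrix (Fin t) (Fin t) ℝ)
        + (-(x + 2)⁻¹) • (Bt * Matrix.diagonal (fun i => (n i : ℝ)))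
      = (x + 2)⁻¹ • ((x + 2) • (1 : Matrix (Fin t) (Fin t) ℝ)
          - Bt * Matrix.diagonal (fun i => (n i : ℝ))) := by
    rw [smul_sub, smul_smul, inv_mul_cancel₀ hx]
    simp [sub_eq_add_neg]
  -- compute the small determinant via matrix determinant lemma
  have hE : (x + 2) • (1 : Matrix (Fin t) (Fin t) ℝ)
        - Bt * Matrix.diagonal (fun i => (n i : ℝ))
      = Matrix.diagonal d * ((1 : Matrix (Fin t) (Fin t) ℝ)
          + Matrix.replicateCol Unit (fun i => -(d i)⁻¹) * Matrix.replicateRow Unit (fun j => (n j : ℝ))) := by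
    ext i j
    rw [Matrix.sub_apply, Matrix.smul_apply, Matrix.mul_diagonal, Matrix.diagonal_mul,
      Matrix.add_apply, Matrix.one_apply]
    have hcr : (Matrix.replicateCol Unit (fun i => -(d i)⁻¹) * Matrix.replicateRow Unit (fun j => (n j : ℝ))) i j
        = -(d i)⁻¹ * (n j : ℝ) := by
      simp [Matrix.mul_apply]
    rw [hcr]
    have hBt_eq : ∀ k, Bt k k = 2 := fun k => if_pos rfl
    have hBt_ne : ∀ k l, k ≠ l → Bt k l = 1 := fun k l h => if_neg h
    by_cases hij : i = j
    · subst hij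
      rw [if_pos rfl, hBt_eq, smul_eq_mul]
      show (x + 2) * 1 - 2 * (n i : ℝ) = (x - (n i : ℝ) + 2) * (1 + -(x - (n i : ℝ) + 2)⁻¹ * (n i : ℝ))
      field_simp [hd i]
      ring
    · rw [if_neg hij, hBt_ne i j hij, smul_zero]
      show (0:ℝ) - 1 * (n j : ℝ) = (x - (n i : ℝ) + 2) * (0 + -(x - (n i : ℝ) + 2)⁻¹ * (n j : ℝ))
      field_simp [hd i]
      ring
  have hsmalldet : ((x + 2) • (1 : Matrix (Fin t) (Fin t) ℝ)
        - Bt * Matrix.diagonal (fun i => (n i : ℝ))).det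
      = (∏ i, d i) - ∑ i, (n i : ℝ) * ∏ j ∈ Finset.univ.erase i, d j := by
    rw [hE, Matrix.det_mul, Matrix.det_diagonal, Matrix.det_one_add_replicateCol_mul_replicateRow, dotProduct]
    rw [mul_add, mul_one, sub_eq_add_neg]
    congr 1
    rw [Finset.mul_sum, ← Finset.sum_neg_distrib]
    refine Finset.sum_congr rfl fun i _ => ?_
    rw [← Finset.mul_prod_erase Finset.univ d (Finset.mem_univ i)]
    field_simp [hd i]
    rw [mul_assoc, mul_div_cancel_left₀ _ (show d i ≠ 0 from hd i)]
  -- put everything together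
  rw [hD, hfac, Matrix.det_smul, comm, hBA, hsmall, Matrix.det_smul, hsmalldet, hcard]
  rw [Fintype.card_fin]
  have hpow : (x + 2) ^ (∑ i, n i) = (x + 2) ^ ((∑ i, n i) - t) * (x + 2) ^ t := by
    rw [← pow_add, Nat.sub_add_cancel htN]
  rw [hpow, inv_pow]
  field_simp [pow_ne_zero t hx]


/-- The characteristic polynomial of the distance matrix of
`K_{n_1,…,n_t}` on `N = n_1 + ⋯ + n_t` vertices equals
`(λ+2)^{N-t}·[∏_i (λ−n_i+2) − ∑_i n_i ∏_{j≠i} (λ−n_j+2)]`. -/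
theorem dist_charpoly_completeMultipartite {t : ℕ} (ht : 2 ≤ t)
    (n : Fin t → ℕ) (hpos : ∀ i, 0 < n i) (N : ℕ) (hN : N = ∑ i, n i) :
    (dMatKMP n).charpoly
      = (X + C (2 : ℝ)) ^ (N - t)
        * ((∏ i : Fin t, (X - C ((n i : ℝ) - 2)))
            - ∑ i : Fin t, C (n i : ℝ)
                * ∏ j ∈ Finset.univ.erase i, (X - C ((n j : ℝ) - 2))) := by
  have htN : t ≤ ∑ i, n i := by
    calc t = ∑ _i : Fin t, 1 := by simp
    _ ≤ ∑ i, n i := Finset.sum_le_sum fun i _ => hpos i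
  apply Polynomial.eq_of_infinite_eval_eq
  have hfin : (({-2} ∪ Set.range (fun i => (n i : ℝ) - 2)) : Set ℝ).Finite :=
    (Set.finite_singleton _).union (Set.finite_range _)
  refine Set.Infinite.mono ?_ hfin.infinite_compl
  intro x hx
  simp only [Set.mem_compl_iff, Set.mem_union, Set.mem_singleton_iff, Set.mem_range,
    not_or, not_exists] at hx
  obtain ⟨hx2, hxd⟩ := hx
  have hx2' : x + 2 ≠ 0 := by
    intro h; apply hx2; linarith
  have hd : ∀ i, x - (n i : ℝ) + 2 ≠ 0 := by
    intro i h; exact hxd i (by linarith)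
  show eval x (dMatKMP n).charpoly = _
  rw [eval_charpoly', key_det n htN x hx2' hd]
  simp only [eval_mul, eval_pow, eval_add, eval_sub, eval_prod, eval_finset_sum, eval_X, eval_C,
    eval_mul, eval_sub]
  rw [hN]
  have h1 : ∏ i : Fin t, (x - (n i : ℝ) + 2) = ∏ i : Fin t, (x - ((n i : ℝ) - 2)) :=
    Finset.prod_congr rfl fun i _ => by ring
  have h2 : (∑ i : Fin t, (n i : ℝ) * ∏ j ∈ Finset.univ.erase i, (x - (n j : ℝ) + 2))
      = ∑ i : Fin t, (n i : ℝ) * ∏ j ∈ Finset.univ.erase i, (x - ((n j : ℝ) - 2)) :=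
    Finset.sum_congr rfl fun i _ =>
      congrArg _ (Finset.prod_congr rfl fun j _ => by ring)
  rw [h1, h2]
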